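/- A partition π of {1,…,n}, viewed as a permutation whose cycles are the blocks of π in increasing order, is non-crossing if and only if |π| + |π^{-1}γ_n| = n + 1, where γ_n = (1,2,…,n) is the full cycle and |σ| denotes the number of cycles of a permutation σ (including fixed points). -/

import Mathlib

open Finset Equiv

/-- A finpartition of `{1,…,n}` is non-crossing if there are no `a < b < c < d` with
`a, c` in one block and `b, d` in a different block. -/
def Finpartition.IsNonCrossing {n : ℕ}
    (π : Finpartition (Finset.univ : Finset (Fin n))) : Prop :=
  ∀ a b c d : Fin n, a < b → b < c → c < d →
    ∀ B₁ ∈ π.parts, ∀ B₂ ∈ π.parts, a ∈ B₁ → c ∈ B₁ → b ∈ B₂ → d ∈ B₂ → B₁ = B₂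

/-- The successor of `x` inside the block `B` "in increasing order": the smallest
element of `B` above `x` if one exists, otherwise the minimum of `B`.  The permutation
associated to a partition sends each `x` to `blockNext B x` where `B` is its block. -/
def blockNext {n : ℕ} (B : Finset (Fin n)) (x : Fin n) : Fin n :=
  if h : (B.filter fun y => x < y).Nonempty then (B.filter fun y => x < y).min' h
  else if h' : B.Nonempty then B.min' h' else x

/-- The number of cycles of a permutation, including fixed points: the number of
equivalence classes of the `SameCycle` relation. -/
noncomputable def cycleCount {n : ℕ} (σ : Equiv.Perm (Fin n)) : ℕ :=
  Nat.card (Quotient (Equiv.Perm.SameCycle.setoid σ))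


theorem Equiv.Perm.apply_inv_self {α : Type*} (f : Equiv.Perm α) (x : α) : f (f⁻¹ x) = x :=
  f.apply_symm_apply x

theorem Equiv.Perm.inv_apply_self {α : Type*} (f : Equiv.Perm α) (x : α) : f⁻¹ (f x) = x :=
  f.symm_apply_apply x

namespace NCAux
open Equiv.Perm

variable {n : ℕ}

lemma sameCycle_induct {σ : Perm (Fin n)} {R : Fin n → Fin n → Prop}
    (htrans : ∀ {x y z}, R x y → R y z → R x z)
    (hrefl : ∀ x, R x x) (hstep : ∀ x, R x (σ x)) {x y} (h : σ.SameCycle x y) : R x y := by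
  have key : ∀ k : ℕ, R x ((σ ^ k) x) := by
    intro k
    induction k with
    | zero => simpa using hrefl x
    | succ k ih =>
        have hz : (σ ^ (k+1)) x = σ ((σ ^ k) x) := by
          rw [pow_succ', Equiv.Perm.mul_apply]
        rw [hz]
        exact htrans ih (hstep _)
  obtain ⟨i, hi, hxy⟩ := h.exists_pow_eq'
  rw [← hxy]
  exact key i

lemma mem_of_sameCycle_invariant {σ : Perm (Fin n)} {S : Finset (Fin n)}
    (hS : ∀ x ∈ S, σ x ∈ S) {x y} (h : σ.SameCycle x y) (hx : x ∈ S) : y ∈ S := by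
  have := sameCycle_induct (R := fun a b => a ∈ S → b ∈ S)
    (fun hab hbc ha => hbc (hab ha)) (fun _ hx => hx) (fun a ha => hS a ha) h
  exact this hx

lemma eq_of_sameCycle_fixed {σ : Perm (Fin n)} {x y : Fin n} (hx : σ x = x)
    (h : σ.SameCycle x y) : y = x := by
  have := mem_of_sameCycle_invariant (S := {x}) (by simp [hx]) h (by simp)
  simpa using this

lemma sameCycle_apply (ρ : Perm (Fin n)) (x : Fin n) : ρ.SameCycle x (ρ x) :=
  ⟨1, by simp⟩

lemma sameCycle_pow_nat {σ : Perm (Fin n)} (x : Fin n) (k : ℕ) : σ.SameCycle x ((σ ^ k) x) :=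
  ⟨k, by rw [zpow_natCast]⟩

/-- the minimal representative predicate -/
def isMinRep (σ : Perm (Fin n)) (x : Fin n) : Prop := ∀ y, σ.SameCycle x y → x ≤ y

lemma cycleCount_eq_card (σ : Perm (Fin n)) :
    cycleCount σ = (univ.filter (fun x => ∀ y, σ.SameCycle x y → x ≤ y)).card := by
  classical
  have hb : Function.Bijective
      (fun x : {x : Fin n // x ∈ univ.filter (fun x => ∀ y, σ.SameCycle x y → x ≤ y)} =>
        (Quotient.mk (SameCycle.setoid σ) x.1)) := by
    constructor
    · rintro ⟨x, hx⟩ ⟨y, hy⟩ h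
      have hxy : σ.SameCycle x y := Quotient.exact h
      simp only [mem_filter, mem_univ, true_and] at hx hy
      exact Subtype.ext (le_antisymm (hx _ hxy) (hy _ hxy.symm))
    · intro q
      induction q using Quotient.inductionOn with
      | h y =>
        have hne : (univ.filter fun z => σ.SameCycle y z).Nonempty :=
          ⟨y, by simp [Equiv.Perm.SameCycle.refl]⟩
        set m := (univ.filter fun z => σ.SameCycle y z).min' hne with hm
        have hmem : m ∈ univ.filter fun z => σ.SameCycle y z := Finset.min'_mem _ hne
        have hym : σ.SameCycle y m := by simpa using hmem
        refine ⟨⟨m, ?_⟩, ?_⟩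
        · simp only [mem_filter, mem_univ, true_and]
          intro z hz
          exact Finset.min'_le _ _ (by simp [hym.trans hz])
        · exact Quotient.sound hym.symm
  rw [cycleCount, ← Nat.card_eq_of_bijective _ hb, Nat.card_eq_finsetCard]

lemma cycleCount_le (σ : Perm (Fin n)) : cycleCount σ ≤ n := by
  rw [cycleCount_eq_card]
  calc (univ.filter (fun x => ∀ y, σ.SameCycle x y → x ≤ y)).card
      ≤ (univ : Finset (Fin n)).card := Finset.card_filter_le _ _
    _ = n := by simp

lemma cycleCount_one : cycleCount (1 : Perm (Fin n)) = n := by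
  rw [cycleCount_eq_card]
  have : (univ.filter (fun x : Fin n => ∀ y, (1 : Perm (Fin n)).SameCycle x y → x ≤ y)) = univ := by
    ext x
    simp only [mem_filter, mem_univ, true_and, iff_true]
    intro y hy
    rw [sameCycle_one] at hy
    exact le_of_eq hy
  rw [this]; simp

lemma cycleCount_inv (σ : Perm (Fin n)) : cycleCount σ⁻¹ = cycleCount σ := by
  unfold cycleCount
  congr 1
  congr 1
  apply Setoid.ext
  intro x y
  exact sameCycle_inv

lemma cycleCount_eq_one_of_forall {σ : Perm (Fin n)} (hn : 0 < n)
    (h : ∀ x y, σ.SameCycle x y) : cycleCount σ = 1 := by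
  rw [cycleCount_eq_card]
  have : (univ.filter (fun x => ∀ y, σ.SameCycle x y → x ≤ y)) = {(⟨0, hn⟩ : Fin n)} := by
    ext x
    simp only [mem_filter, mem_univ, true_and, mem_singleton]
    constructor
    · intro hx
      have := hx ⟨0, hn⟩ (h _ _)
      exact le_antisymm (by exact this) (Fin.mk_le_of_le_val (by simp))
    · rintro rfl y _
      exact Fin.mk_le_of_le_val (by simp)
  rw [this]; simp

open Fin.NatCast Fin.CommRing in
lemma sameCycle_finRotate (hn : 0 < n) (x y : Fin n) : (finRotate n).SameCycle x y := by
  obtain ⟨m, rfl⟩ : ∃ m, n = m + 1 := ⟨n - 1, by omega⟩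
  have hpow : ∀ k : ℕ, ((finRotate (m+1)) ^ k) x = x + (k : Fin (m+1)) := by
    intro k
    induction k with
    | zero => simp
    | succ j ih =>
        rw [pow_succ', Equiv.Perm.mul_apply, ih, finRotate_succ_apply]
        push_cast
        ring
  refine ⟨((y - x : Fin (m+1)).val : ℤ), ?_⟩
  rw [zpow_natCast, hpow]
  simp

lemma cycleCount_finRotate (hn : 0 < n) : cycleCount (finRotate n) = 1 :=
  cycleCount_eq_one_of_forall hn (sameCycle_finRotate hn)

section Swap

variable {τ : Perm (Fin n)} {a b : Fin n}

/-- If `a,b` are in different cycles of `τ`, they are in the same cycle of `swap a b * τ`. -/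
lemma sameCycle_swap_mul_of_not (hab : a ≠ b) (h : ¬ τ.SameCycle a b) :
    (Equiv.swap a b * τ).SameCycle b a := by
  have H : ∃ m, 0 < m ∧ (τ ^ m) b = b :=
    ⟨orderOf τ, orderOf_pos τ, by rw [pow_orderOf_eq_one]; rfl⟩
  classical
  set m := Nat.find H with hmdef
  obtain ⟨hm0, hmfix⟩ := Nat.find_spec H
  have key : ∀ k, k < m → ((Equiv.swap a b * τ) ^ k) b = (τ ^ k) b := by
    intro k hk
    induction k with
    | zero => simp
    | succ k ih =>
        have hk' : k < m := Nat.lt_of_succ_lt hk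
        rw [pow_succ', Equiv.Perm.mul_apply, ih hk', Equiv.Perm.mul_apply]
        have h1 : τ ((τ ^ k) b) = (τ ^ (k+1)) b := by
          rw [pow_succ', Equiv.Perm.mul_apply]
        rw [h1]
        have hna : (τ ^ (k+1)) b ≠ a := by
          intro hc
          exact h (Equiv.Perm.SameCycle.symm ⟨(k+1 : ℕ), by rw [zpow_natCast, hc]⟩)
        have hnb : (τ ^ (k+1)) b ≠ b := by
          intro hc
          exact Nat.find_min H hk ⟨Nat.succ_pos k, hc⟩
        exact Equiv.swap_apply_of_ne_of_ne hna hnb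
  have hm0' : 0 < m := hm0
  have hfin : ((Equiv.swap a b * τ) ^ m) b = a := by
    have hm' : m = (m-1) + 1 := by omega
    rw [hm', pow_succ', Equiv.Perm.mul_apply, key (m-1) (by omega), Equiv.Perm.mul_apply]
    have h1 : τ ((τ ^ (m-1)) b) = (τ ^ m) b := by
      conv_rhs => rw [hm']
      rw [pow_succ', Equiv.Perm.mul_apply]
    rw [h1, hmfix, Equiv.swap_apply_right]
  exact ⟨(m : ℤ), by rw [zpow_natCast, hfin]⟩

/-- If `a,b` are in the same cycle of `τ`, they are in different cycles of `swap a b * τ`. -/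
lemma not_sameCycle_swap_mul (hab : a ≠ b) (h : τ.SameCycle a b) :
    ¬ (Equiv.swap a b * τ).SameCycle a b := by
  classical
  have H : ∃ m, (τ ^ m) a = b := by
    obtain ⟨i, _, hi⟩ := h.exists_pow_eq'
    exact ⟨i, hi⟩
  set m := Nat.find H with hmdef
  have hmeq : (τ ^ m) a = b := Nat.find_spec H
  have hmin : ∀ k, k < m → (τ ^ k) a ≠ b := fun k hk => Nat.find_min H hk
  have hm0 : 0 < m := by
    rcases Nat.eq_zero_or_pos m with h0 | h0
    · exfalso; apply hab; rw [h0] at hmeq; simpa using hmeq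
    · exact h0
  set S : Finset (Fin n) := (Finset.range m).image (fun k => (τ ^ k) a) with hSdef
  have haS : a ∈ S := by
    simp only [hSdef, Finset.mem_image, Finset.mem_range]
    exact ⟨0, hm0, by simp⟩
  have hbS : b ∉ S := by
    simp only [hSdef, Finset.mem_image, Finset.mem_range]
    rintro ⟨k, hk, hkeq⟩
    exact hmin k hk hkeq
  have hclosed : ∀ x ∈ S, (Equiv.swap a b * τ) x ∈ S := by
    intro x hx
    simp only [hSdef, Finset.mem_image, Finset.mem_range] at hx
    obtain ⟨k, hk, rfl⟩ := hx
    rw [Equiv.Perm.mul_apply]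
    have h1 : τ ((τ ^ k) a) = (τ ^ (k+1)) a := by
      rw [pow_succ', Equiv.Perm.mul_apply]
    rw [h1]
    rcases Nat.lt_or_ge (k+1) m with hlt | hge
    · have hna : (τ ^ (k+1)) a ≠ b := hmin _ hlt
      have hnaa : (τ ^ (k+1)) a ≠ a := by
        intro hc
        have : (τ ^ (m - k - 1)) ((τ ^ (k+1)) a) = b := by
          rw [← Equiv.Perm.mul_apply, ← pow_add]
          have : m - k - 1 + (k + 1) = m := by omega
          rw [this, hmeq]
        rw [hc] at this
        exact hmin (m - k - 1) (by omega) this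
      rw [Equiv.swap_apply_of_ne_of_ne hnaa hna]
      simp only [hSdef, Finset.mem_image, Finset.mem_range]
      exact ⟨k+1, hlt, rfl⟩
    · have hkm : k + 1 = m := by omega
      rw [hkm, hmeq, Equiv.swap_apply_right]
      exact haS
  intro hsc
  exact hbS (mem_of_sameCycle_invariant hclosed hsc haS)

/-- Cycles of `swap a b * τ` when `a, b` are in different cycles of `τ`: the two cycles merge. -/
lemma sameCycle_swap_mul_iff (hab : a ≠ b) (h : ¬ τ.SameCycle a b) {x y : Fin n} :
    (Equiv.swap a b * τ).SameCycle x y ↔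
      τ.SameCycle x y ∨ (τ.SameCycle x a ∧ τ.SameCycle b y) ∨
        (τ.SameCycle x b ∧ τ.SameCycle a y) := by
  have hTba : (Equiv.swap a b * τ).SameCycle b a := sameCycle_swap_mul_of_not hab h
  have hstep' : ∀ x, (Equiv.swap a b * τ).SameCycle x (τ x) := by
    intro x
    by_cases h1 : τ x = a
    · have hx : (Equiv.swap a b * τ) x = b := by
        rw [Equiv.Perm.mul_apply, h1, Equiv.swap_apply_left]
      have hxb := sameCycle_apply (Equiv.swap a b * τ) x
      rw [hx] at hxb
      rw [h1]
      exact hxb.trans hTba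
    by_cases h2 : τ x = b
    · have hx : (Equiv.swap a b * τ) x = a := by
        rw [Equiv.Perm.mul_apply, h2, Equiv.swap_apply_right]
      have hxa := sameCycle_apply (Equiv.swap a b * τ) x
      rw [hx] at hxa
      rw [h2]
      exact hxa.trans hTba.symm
    · have hx : (Equiv.swap a b * τ) x = τ x := by
        rw [Equiv.Perm.mul_apply, Equiv.swap_apply_of_ne_of_ne h1 h2]
      have hxx := sameCycle_apply (Equiv.swap a b * τ) x
      rw [hx] at hxx
      exact hxx
  have hofτ : ∀ {x y : Fin n}, τ.SameCycle x y → (Equiv.swap a b * τ).SameCycle x y := by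
    intro x y hxy
    exact sameCycle_induct (R := (Equiv.swap a b * τ).SameCycle)
      (fun h1 h2 => h1.trans h2) (fun z => Equiv.Perm.SameCycle.refl _ z) hstep' hxy
  constructor
  · intro hxy
    refine sameCycle_induct (R := fun u v => τ.SameCycle u v ∨ (τ.SameCycle u a ∧ τ.SameCycle b v) ∨
        (τ.SameCycle u b ∧ τ.SameCycle a v)) ?_ ?_ ?_ hxy
    · rintro u v w (h1 | ⟨h1, h2⟩ | ⟨h1, h2⟩) (g1 | ⟨g1, g2⟩ | ⟨g1, g2⟩)
      · exact Or.inl (h1.trans g1)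
      · exact Or.inr (Or.inl ⟨h1.trans g1, g2⟩)
      · exact Or.inr (Or.inr ⟨h1.trans g1, g2⟩)
      · exact Or.inr (Or.inl ⟨h1, h2.trans g1⟩)
      · exact absurd (h2.trans g1).symm h
      · exact Or.inl (h1.trans g2)
      · exact Or.inr (Or.inr ⟨h1, h2.trans g1⟩)
      · exact Or.inl (h1.trans g2)
      · exact absurd (h2.trans g1) h
    · intro u; exact Or.inl (Equiv.Perm.SameCycle.refl _ u)
    · intro u
      by_cases h1 : τ u = a
      · have hu : (Equiv.swap a b * τ) u = b := by
          rw [Equiv.Perm.mul_apply, h1, Equiv.swap_apply_left]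
        rw [hu]
        exact Or.inr (Or.inl ⟨h1 ▸ sameCycle_apply τ u, Equiv.Perm.SameCycle.refl _ b⟩)
      by_cases h2 : τ u = b
      · have hu : (Equiv.swap a b * τ) u = a := by
          rw [Equiv.Perm.mul_apply, h2, Equiv.swap_apply_right]
        rw [hu]
        exact Or.inr (Or.inr ⟨h2 ▸ sameCycle_apply τ u, Equiv.Perm.SameCycle.refl _ a⟩)
      · have hu : (Equiv.swap a b * τ) u = τ u := by
          rw [Equiv.Perm.mul_apply, Equiv.swap_apply_of_ne_of_ne h1 h2]
        rw [hu]
        exact Or.inl (sameCycle_apply τ u)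
  · rintro (h1 | ⟨h1, h2⟩ | ⟨h1, h2⟩)
    · exact hofτ h1
    · exact ((hofτ h1).trans hTba.symm).trans (hofτ h2)
    · exact ((hofτ h1).trans hTba).trans (hofτ h2)

lemma cycleCount_swap_mul_merge_aux (hab : a ≠ b) (h : ¬ τ.SameCycle a b)
    (hle : (univ.filter fun z => τ.SameCycle a z).min'
        ⟨a, by simp [Equiv.Perm.SameCycle.refl]⟩ ≤
      (univ.filter fun z => τ.SameCycle b z).min' ⟨b, by simp [Equiv.Perm.SameCycle.refl]⟩) :
    cycleCount τ = cycleCount (Equiv.swap a b * τ) + 1 := by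
  classical
  set ma := (univ.filter fun z => τ.SameCycle a z).min'
      ⟨a, by simp [Equiv.Perm.SameCycle.refl]⟩ with hmadef
  set mb := (univ.filter fun z => τ.SameCycle b z).min'
      ⟨b, by simp [Equiv.Perm.SameCycle.refl]⟩ with hmbdef
  have hma : τ.SameCycle a ma := by
    have := Finset.min'_mem (univ.filter fun z => τ.SameCycle a z)
      ⟨a, by simp [Equiv.Perm.SameCycle.refl]⟩
    simpa using this
  have hmb : τ.SameCycle b mb := by
    have := Finset.min'_mem (univ.filter fun z => τ.SameCycle b z)
      ⟨b, by simp [Equiv.Perm.SameCycle.refl]⟩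
    simpa using this
  have hma_le : ∀ y, τ.SameCycle a y → ma ≤ y := by
    intro y hy
    exact Finset.min'_le _ _ (by simp [hy])
  have hmb_le : ∀ y, τ.SameCycle b y → mb ≤ y := by
    intro y hy
    exact Finset.min'_le _ _ (by simp [hy])
  have hset : univ.filter (fun x => ∀ y, (Equiv.swap a b * τ).SameCycle x y → x ≤ y)
      = (univ.filter (fun x => ∀ y, τ.SameCycle x y → x ≤ y)).erase mb := by
    ext x
    simp only [Finset.mem_erase, Finset.mem_filter, Finset.mem_univ, true_and]
    constructor
    · intro hx
      have hPx : ∀ y, τ.SameCycle x y → x ≤ y := by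
        intro y hy
        exact hx y ((sameCycle_swap_mul_iff hab h).mpr (Or.inl hy))
      refine ⟨?_, hPx⟩
      intro hxmb
      have hscma : (Equiv.swap a b * τ).SameCycle x ma :=
        (sameCycle_swap_mul_iff hab h).mpr
          (Or.inr (Or.inr ⟨hxmb ▸ hmb.symm, hma⟩))
      have h1 : x ≤ ma := hx _ hscma
      have h2 : ma = mb := le_antisymm hle (hxmb ▸ h1)
      exact h ((hma.trans (h2 ▸ hmb.symm)))
    · rintro ⟨hxmb, hPx⟩
      intro y hy
      rcases (sameCycle_swap_mul_iff hab h).mp hy with h1 | ⟨h1, h2⟩ | ⟨h1, h2⟩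
      · exact hPx y h1
      · have hxma : x = ma :=
          le_antisymm (hPx ma (h1.trans hma)) (hma_le x h1.symm)
        calc x = ma := hxma
          _ ≤ mb := hle
          _ ≤ y := hmb_le y h2
      · exfalso
        apply hxmb
        exact le_antisymm (hPx mb (h1.trans hmb)) (hmb_le x h1.symm)
  have hmbmem : mb ∈ univ.filter (fun x => ∀ y, τ.SameCycle x y → x ≤ y) := by
    simp only [Finset.mem_filter, Finset.mem_univ, true_and]
    intro y hy
    exact hmb_le y (hmb.trans hy)
  rw [cycleCount_eq_card, cycleCount_eq_card, hset,
    Finset.card_erase_of_mem hmbmem]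
  have : 0 < (univ.filter (fun x => ∀ y, τ.SameCycle x y → x ≤ y)).card :=
    Finset.card_pos.mpr ⟨mb, hmbmem⟩
  omega

/-- Merging two cycles: the cycle count drops by one. -/
lemma cycleCount_swap_mul_merge (hab : a ≠ b) (h : ¬ τ.SameCycle a b) :
    cycleCount τ = cycleCount (Equiv.swap a b * τ) + 1 := by
  rcases le_total ((univ.filter fun z => τ.SameCycle a z).min'
      ⟨a, by simp [Equiv.Perm.SameCycle.refl]⟩)
      ((univ.filter fun z => τ.SameCycle b z).min'
      ⟨b, by simp [Equiv.Perm.SameCycle.refl]⟩) with hle | hle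
  · exact cycleCount_swap_mul_merge_aux hab h hle
  · have := cycleCount_swap_mul_merge_aux (τ := τ) hab.symm
      (fun hc => h hc.symm) hle
    rwa [Equiv.swap_comm b a] at this

/-- Splitting a cycle: the cycle count increases by one. -/
lemma cycleCount_swap_mul_split (hab : a ≠ b) (h : τ.SameCycle a b) :
    cycleCount (Equiv.swap a b * τ) = cycleCount τ + 1 := by
  have hns := not_sameCycle_swap_mul hab h
  have := cycleCount_swap_mul_merge hab hns
  rwa [← mul_assoc, Equiv.swap_mul_self, one_mul] at this

lemma cycleCount_le_swap_mul_add_one (a b : Fin n) (τ : Perm (Fin n)) :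
    cycleCount τ ≤ cycleCount (Equiv.swap a b * τ) + 1 := by
  by_cases hab : a = b
  · subst hab
    have hs : ∀ c : Fin n, Equiv.swap c c * τ = τ := by
      intro c; ext z; simp [Equiv.swap_self]
    rw [hs]
    omega
  by_cases h : τ.SameCycle a b
  · rw [cycleCount_swap_mul_split hab h]; omega
  · rw [cycleCount_swap_mul_merge hab h]

end Swap

section Ineq

lemma exists_swap_list (σ : Perm (Fin n)) :
    ∃ L : List (Perm (Fin n)), (∀ t ∈ L, ∃ a b : Fin n, a ≠ b ∧ t = Equiv.swap a b) ∧
      L.prod = σ ∧ L.length + cycleCount σ = n := by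
  classical
  suffices h : ∀ k (σ : Perm (Fin n)), σ.support.card ≤ k →
      ∃ L : List (Perm (Fin n)), (∀ t ∈ L, ∃ a b : Fin n, a ≠ b ∧ t = Equiv.swap a b) ∧
        L.prod = σ ∧ L.length + cycleCount σ = n from
    h σ.support.card σ le_rfl
  intro k
  induction k with
  | zero =>
      intro σ hk
      have hσ : σ = 1 := by
        rw [← Equiv.Perm.support_eq_empty_iff]
        exact Finset.card_eq_zero.mp (Nat.le_zero.mp hk)
      subst hσ
      exact ⟨[], by simp, by simp, by rw [cycleCount_one]; simp⟩
  | succ k ih =>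
      intro σ hk
      by_cases hσ : σ = 1
      · subst hσ
        exact ⟨[], by simp, by simp, by rw [cycleCount_one]; simp⟩
      · obtain ⟨x, hx⟩ : ∃ x, σ x ≠ x := by
          by_contra hc
          push_neg at hc
          exact hσ (Equiv.ext fun z => by rw [hc z]; rfl)
        set σ' := Equiv.swap x (σ x) * σ with hσ'def
        have hcard : σ'.support.card < σ.support.card :=
          Equiv.Perm.card_support_swap_mul hx
        have hle : σ'.support.card ≤ k := by omega
        obtain ⟨L, hL1, hL2, hL3⟩ := ih σ' hle
        have hcc : cycleCount σ' = cycleCount σ + 1 :=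
          cycleCount_swap_mul_split (Ne.symm hx) (sameCycle_apply σ x)
        refine ⟨Equiv.swap x (σ x) :: L, ?_, ?_, ?_⟩
        · rintro t ht
          rcases List.mem_cons.mp ht with rfl | ht'
          · exact ⟨x, σ x, Ne.symm hx, rfl⟩
          · exact hL1 t ht'
        · rw [List.prod_cons, hL2, hσ'def, ← mul_assoc, Equiv.swap_mul_self, one_mul]
        · simp only [List.length_cons]
          omega

lemma cycleCount_prod_mul_le (L : List (Perm (Fin n)))
    (hL : ∀ t ∈ L, ∃ a b : Fin n, a ≠ b ∧ t = Equiv.swap a b) (τ : Perm (Fin n)) :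
    cycleCount τ ≤ cycleCount (L.prod * τ) + L.length := by
  induction L with
  | nil => simp
  | cons t L ih =>
      have ht := hL t List.mem_cons_self
      obtain ⟨a, b, hab, rfl⟩ := ht
      have h1 : cycleCount τ ≤ cycleCount (L.prod * τ) + L.length :=
        ih (fun t' ht' => hL t' (List.mem_cons_of_mem _ ht'))
      have h2 : cycleCount (L.prod * τ) ≤ cycleCount (Equiv.swap a b * (L.prod * τ)) + 1 :=
        cycleCount_le_swap_mul_add_one a b _
      rw [List.prod_cons, mul_assoc]
      simp only [List.length_cons]
      omega

lemma sum_le (hn : 0 < n) (σ : Perm (Fin n)) :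
    cycleCount σ + cycleCount (σ⁻¹ * finRotate n) ≤ n + 1 := by
  obtain ⟨L, hL1, hL2, hL3⟩ := exists_swap_list σ
  have h1 : cycleCount (σ⁻¹ * finRotate n) ≤
      cycleCount (σ * (σ⁻¹ * finRotate n)) + L.length := by
    rw [← hL2] at *
    exact cycleCount_prod_mul_le L hL1 _
  rw [← mul_assoc, mul_inv_cancel, one_mul] at h1
  rw [cycleCount_finRotate hn] at h1
  omega

lemma split_keeps_sum (hn : 0 < n) {σ : Perm (Fin n)} {x y : Fin n} (hxy : x ≠ y)
    (hsc : σ.SameCycle x y)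
    (hsum : cycleCount σ + cycleCount (σ⁻¹ * finRotate n) = n + 1) :
    cycleCount (σ * Equiv.swap x y) = cycleCount σ + 1 ∧
      cycleCount ((σ * Equiv.swap x y)⁻¹ * finRotate n) + 1 =
        cycleCount (σ⁻¹ * finRotate n) ∧
      cycleCount (σ * Equiv.swap x y) +
        cycleCount ((σ * Equiv.swap x y)⁻¹ * finRotate n) = n + 1 := by
  have hinv : (σ * Equiv.swap x y)⁻¹ = Equiv.swap x y * σ⁻¹ := by
    rw [mul_inv_rev, Equiv.swap_inv]
  have hcσ' : cycleCount (σ * Equiv.swap x y) = cycleCount σ + 1 := by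
    rw [← cycleCount_inv (σ * Equiv.swap x y), hinv,
      cycleCount_swap_mul_split hxy (sameCycle_inv.mpr hsc), cycleCount_inv]
  have hτ' : (σ * Equiv.swap x y)⁻¹ * finRotate n =
      Equiv.swap x y * (σ⁻¹ * finRotate n) := by
    rw [hinv, mul_assoc]
  by_cases hsc2 : (σ⁻¹ * finRotate n).SameCycle x y
  · exfalso
    have h1 : cycleCount ((σ * Equiv.swap x y)⁻¹ * finRotate n) =
        cycleCount (σ⁻¹ * finRotate n) + 1 := by
      rw [hτ']
      exact cycleCount_swap_mul_split hxy hsc2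
    have h2 := sum_le hn (σ * Equiv.swap x y)
    omega
  · have h1 : cycleCount (σ⁻¹ * finRotate n) =
        cycleCount ((σ * Equiv.swap x y)⁻¹ * finRotate n) + 1 := by
      rw [hτ']
      exact cycleCount_swap_mul_merge hxy hsc2
    exact ⟨hcσ', by omega, by omega⟩

end Ineq

section Del

variable {σ : Perm (Fin n)} {x : Fin n}

lemma del_apply_self (hx : σ x ≠ x) : (σ * Equiv.swap x (σ⁻¹ x)) x = x := by
  rw [Equiv.Perm.mul_apply, Equiv.swap_apply_left, Equiv.Perm.apply_inv_self]

lemma del_apply_p (hx : σ x ≠ x) : (σ * Equiv.swap x (σ⁻¹ x)) (σ⁻¹ x) = σ x := by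
  rw [Equiv.Perm.mul_apply, Equiv.swap_apply_right]

lemma del_apply_other {z : Fin n} (hz1 : z ≠ x) (hz2 : z ≠ σ⁻¹ x) :
    (σ * Equiv.swap x (σ⁻¹ x)) z = σ z := by
  rw [Equiv.Perm.mul_apply, Equiv.swap_apply_of_ne_of_ne hz1 hz2]

lemma p_ne_x (hx : σ x ≠ x) : σ⁻¹ x ≠ x := by
  intro hc
  apply hx
  conv_lhs => rw [← hc]
  rw [Equiv.Perm.apply_inv_self]

/-- easy direction: same cycle after deletion implies same cycle before. -/
lemma del_sameCycle_imp (hx : σ x ≠ x) {u v : Fin n}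
    (h : (σ * Equiv.swap x (σ⁻¹ x)).SameCycle u v) : σ.SameCycle u v := by
  refine sameCycle_induct (fun h1 h2 => h1.trans h2) (fun z => Equiv.Perm.SameCycle.refl _ z)
    ?_ h
  intro z
  by_cases hz1 : z = x
  · subst hz1
    rw [del_apply_self hx]
  by_cases hz2 : z = σ⁻¹ x
  · subst hz2
    rw [del_apply_p hx]
    have h1 := sameCycle_apply σ (σ⁻¹ x)
    rw [Equiv.Perm.apply_inv_self] at h1
    exact h1.trans (sameCycle_apply σ x)
  · rw [del_apply_other hz1 hz2]
    exact sameCycle_apply σ z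

/-- hard direction: points different from `x` in the same `σ`-cycle stay in the
same cycle after deleting `x`. -/
lemma del_sameCycle (hx : σ x ≠ x) {u v : Fin n} (hu : u ≠ x) (hv : v ≠ x)
    (h : σ.SameCycle u v) : (σ * Equiv.swap x (σ⁻¹ x)).SameCycle u v := by
  have hpx : σ⁻¹ x ≠ x := p_ne_x hx
  have aux : ∀ k, ∀ u : Fin n, u ≠ x → (σ ^ k) u ≠ x →
      (σ * Equiv.swap x (σ⁻¹ x)).SameCycle u ((σ ^ k) u) := by
    intro k
    induction k using Nat.strong_induction_on with
    | _ k ih =>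
      match k with
      | 0 =>
          intro u hu _
          simpa using Equiv.Perm.SameCycle.refl _ u
      | Nat.succ k =>
          intro u hu hk
          have hsk : (σ ^ (k+1)) u = σ ((σ ^ k) u) := by
            rw [pow_succ', Equiv.Perm.mul_apply]
          by_cases hw : (σ ^ k) u = x
          · have hk1 : k ≠ 0 := by
              rintro rfl
              simp at hw
              exact hu hw
            have hw2 : (σ ^ (k-1)) u = σ⁻¹ x := by
              have h1 : σ ((σ ^ (k-1)) u) = x := by
                have : (σ ^ ((k-1)+1)) u = σ ((σ ^ (k-1)) u) := by
                  rw [pow_succ', Equiv.Perm.mul_apply]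
                rw [← this]
                have hkk : k - 1 + 1 = k := by omega
                rw [hkk, hw]
              rw [← h1, Equiv.Perm.inv_apply_self]
            have h1 : (σ * Equiv.swap x (σ⁻¹ x)).SameCycle u (σ⁻¹ x) := by
              have := ih (k-1) (by omega) u hu (by rw [hw2]; exact hpx)
              rwa [hw2] at this
            rw [hsk, hw]
            have h2 := sameCycle_apply (σ * Equiv.swap x (σ⁻¹ x)) (σ⁻¹ x)
            rw [del_apply_p hx] at h2
            exact h1.trans h2
          · have h1 := ih k (by omega) u hu hw
            by_cases hwp : (σ ^ k) u = σ⁻¹ x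
            · exfalso
              apply hk
              rw [hsk, hwp, Equiv.Perm.apply_inv_self]
            · have h2 := sameCycle_apply (σ * Equiv.swap x (σ⁻¹ x)) ((σ ^ k) u)
              rw [del_apply_other hw hwp] at h2
              rw [hsk]
              exact h1.trans h2
  obtain ⟨k, _, hk⟩ := h.exists_pow_eq'
  have := aux k u hu (by rw [hk]; exact hv)
  rwa [hk] at this

end Del

section Backward

lemma finRotate_apply [inst : NeZero n] (i : Fin n) : finRotate n i = i + 1 := by
  match n, inst, i with
  | (m+1), _, i => exact finRotate_succ_apply i

lemma val_add_one_of_lt' [NeZero n] {z w : Fin n} (h : z < w) :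
    ((z + 1 : Fin n) : ℕ) = (z : ℕ) + 1 := by
  have h2 : 2 ≤ n := by
    have h3 := w.isLt
    have h4 := Fin.lt_iff_val_lt_val.mp h
    omega
  have hv : ((z + 1 : Fin n) : ℕ) = ((z : ℕ) + ((1 : Fin n) : ℕ)) % n := Fin.val_add z 1
  have h1 : ((1 : Fin n) : ℕ) = 1 % n := Fin.val_one' n
  have hmod : 1 % n = 1 := Nat.mod_eq_of_lt (by omega)
  have h3 := w.isLt
  have h4 := Fin.lt_iff_val_lt_val.mp h
  rw [hv, h1, hmod]
  exact Nat.mod_eq_of_lt (by omega)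

lemma crossing_no_eq (hn : 0 < n) :
    ∀ k, ∀ σ : Perm (Fin n), σ.support.card ≤ k →
      ∀ a b c d : Fin n, a < b → b < c → c < d →
        σ.SameCycle a c → σ.SameCycle b d → ¬ σ.SameCycle a b →
        cycleCount σ + cycleCount (σ⁻¹ * finRotate n) = n + 1 → False := by
  intro k
  induction k with
  | zero =>
      intro σ hk a b c d hab hbc hcd hac hbd hnab hsum
      have hσ : σ = 1 := by
        rw [← Equiv.Perm.support_eq_empty_iff]
        exact Finset.card_eq_zero.mp (Nat.le_zero.mp hk)
      subst hσ
      rw [sameCycle_one] at hac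
      subst hac
      exact absurd rfl (ne_of_lt (hab.trans hbc))
  | succ k ih =>
      intro σ hk a b c d hab hbc hcd hac hbd hnab hsum
      by_cases hex : ∃ x, σ x ≠ x ∧ x ≠ a ∧ x ≠ b ∧ x ≠ c ∧ x ≠ d
      · obtain ⟨x, hx, hxa, hxb, hxc, hxd⟩ := hex
        have hpx : x ≠ σ⁻¹ x := fun hc => p_ne_x hx hc.symm
        have hscxp : σ.SameCycle x (σ⁻¹ x) := by
          have := sameCycle_apply σ⁻¹ x
          exact sameCycle_inv.mp this
        obtain ⟨hc1, hc2, hc3⟩ := split_keeps_sum hn hpx hscxp hsum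
        set σ' := σ * Equiv.swap x (σ⁻¹ x) with hσ'def
        have hsupp : σ'.support.card ≤ k := by
          have hsub : σ'.support ⊆ σ.support.erase x := by
            intro z hz
            rw [Equiv.Perm.mem_support] at hz
            rw [Finset.mem_erase, Equiv.Perm.mem_support]
            constructor
            · intro hc
              subst hc
              exact hz (del_apply_self hx)
            · by_cases hz1 : z = x
              · exfalso; subst hz1; exact hz (del_apply_self hx)
              by_cases hz2 : z = σ⁻¹ x
              · subst hz2
                rw [Equiv.Perm.apply_inv_self]
                exact fun hc => p_ne_x hx hc.symm
              · rw [hσ'def, del_apply_other hz1 hz2] at hz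
                exact hz
          have hxs : x ∈ σ.support := Equiv.Perm.mem_support.mpr hx
          have := Finset.card_le_card hsub
          rw [Finset.card_erase_of_mem hxs] at this
          omega
        exact ih σ' hsupp a b c d hab hbc hcd
          (del_sameCycle hx hxa.symm hxc.symm hac)
          (del_sameCycle hx hxb.symm hxd.symm hbd)
          (fun hcon => hnab (del_sameCycle_imp hx hcon)) hc3
      · push_neg at hex
        -- every non-fixed point is among a,b,c,d; derive σ = swap a c * swap b d
        have hfix : ∀ z : Fin n, z ≠ a → z ≠ b → z ≠ c → z ≠ d → σ z = z := by
          intro z h1 h2 h3 h4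
          by_contra hc
          exact h4 (hex z hc h1 h2 h3)
        haveI : NeZero n := ⟨hn.ne'⟩
        have hanb : a ≠ b := ne_of_lt hab
        have hanc : a ≠ c := ne_of_lt (hab.trans hbc)
        have hand : a ≠ d := ne_of_lt ((hab.trans hbc).trans hcd)
        have hbnc : b ≠ c := ne_of_lt hbc
        have hbnd : b ≠ d := ne_of_lt (hbc.trans hcd)
        have hcnd : c ≠ d := ne_of_lt hcd
        have haa : σ a ≠ a := by
          intro hc
          exact hanc (eq_of_sameCycle_fixed hc hac).symm
        have hmem : ∀ z : Fin n, σ z ≠ z → z = a ∨ z = b ∨ z = c ∨ z = d := by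
          intro z hz
          by_contra hcon
          push_neg at hcon
          exact hz (hfix z hcon.1 hcon.2.1 hcon.2.2.1 hcon.2.2.2)
        have hσa : σ a = c := by
          have h1 : σ (σ a) ≠ σ a := fun hc => haa (σ.injective hc)
          rcases hmem (σ a) h1 with h | h | h | h
          · exact absurd h haa
          · exact absurd (h ▸ sameCycle_apply σ a) hnab
          · exact h
          · exact absurd ((h ▸ sameCycle_apply σ a).trans hbd.symm) hnab
        have hcc : σ c ≠ c := by
          intro hc
          exact hanc (eq_of_sameCycle_fixed hc hac.symm)
        have hσc : σ c = a := by
          have h1 : σ (σ c) ≠ σ c := fun hc => hcc (σ.injective hc)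
          rcases hmem (σ c) h1 with h | h | h | h
          · exact h
          · exact absurd (hac.trans (h ▸ sameCycle_apply σ c)) hnab
          · exact absurd h hcc
          · exact absurd ((hac.trans (h ▸ sameCycle_apply σ c)).trans hbd.symm) hnab
        have hbb : σ b ≠ b := by
          intro hc
          exact hbnd.symm (eq_of_sameCycle_fixed hc hbd)
        have hσb : σ b = d := by
          have h1 : σ (σ b) ≠ σ b := fun hc => hbb (σ.injective hc)
          rcases hmem (σ b) h1 with h | h | h | h
          · exact absurd (h ▸ sameCycle_apply σ b).symm hnab
          · exact absurd h hbb
          · exact absurd (hac.trans (h ▸ sameCycle_apply σ b).symm) hnab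
          · exact h
        have hdd : σ d ≠ d := by
          intro hc
          exact hbnd (eq_of_sameCycle_fixed hc hbd.symm)
        have hσd : σ d = b := by
          have h1 : σ (σ d) ≠ σ d := fun hc => hdd (σ.injective hc)
          rcases hmem (σ d) h1 with h | h | h | h
          · exact absurd ((h ▸ sameCycle_apply σ d).symm.trans hbd.symm) hnab
          · exact h
          · exact absurd ((hac.trans (h ▸ sameCycle_apply σ d).symm).trans hbd.symm) hnab
          · exact absurd h hdd
        have hσeq : σ = Equiv.swap a c * Equiv.swap b d := by
          ext z
          rw [Equiv.Perm.mul_apply]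
          by_cases hza : z = a
          · subst hza
            rw [Equiv.swap_apply_of_ne_of_ne hanb hand, Equiv.swap_apply_left, hσa]
          by_cases hzb : z = b
          · subst hzb
            rw [Equiv.swap_apply_left, Equiv.swap_apply_of_ne_of_ne hand.symm hcnd.symm,
              hσb]
          by_cases hzc : z = c
          · subst hzc
            rw [Equiv.swap_apply_of_ne_of_ne hbnc.symm hcnd, Equiv.swap_apply_right, hσc]
          by_cases hzd : z = d
          · subst hzd
            rw [Equiv.swap_apply_right, Equiv.swap_apply_of_ne_of_ne hanb.symm hbnc, hσd]
          · rw [Equiv.swap_apply_of_ne_of_ne hzb hzd, Equiv.swap_apply_of_ne_of_ne hza hzc]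
            exact congrArg Fin.val (hfix z hza hzb hzc hzd)
        -- cycle counts of the crossing double transposition
        have h1 : cycleCount (1 : Perm (Fin n)) =
            cycleCount (Equiv.swap b d * 1) + 1 :=
          cycleCount_swap_mul_merge hbnd (by rw [sameCycle_one]; exact hbnd)
        rw [mul_one, cycleCount_one] at h1
        have h2 : cycleCount (Equiv.swap b d) =
            cycleCount (Equiv.swap a c * Equiv.swap b d) + 1 := by
          refine cycleCount_swap_mul_merge hanc ?_
          intro hc
          have hfixa : Equiv.swap b d a = a := Equiv.swap_apply_of_ne_of_ne hanb hand
          exact hanc (eq_of_sameCycle_fixed hfixa hc).symm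
        have h3 : cycleCount (Equiv.swap a c * finRotate n) = cycleCount (finRotate n) + 1 :=
          cycleCount_swap_mul_split hanc (sameCycle_finRotate hn a c)
        rw [cycleCount_finRotate hn] at h3
        have hS : ∀ z ∈ univ.filter (fun z : Fin n => a ≤ z ∧ z < c),
            (Equiv.swap a c * finRotate n) z ∈ univ.filter (fun z : Fin n => a ≤ z ∧ z < c) := by
          intro z hz
          simp only [Finset.mem_filter, Finset.mem_univ, true_and] at hz ⊢
          obtain ⟨hz1, hz2⟩ := hz
          rw [Equiv.Perm.mul_apply, finRotate_apply]
          have hval : ((z + 1 : Fin n) : ℕ) = (z : ℕ) + 1 := val_add_one_of_lt' hz2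
          by_cases hzc : z + 1 = c
          · rw [hzc, Equiv.swap_apply_right]
            exact ⟨le_refl a, hab.trans hbc⟩
          · have hza : z + 1 ≠ a := by
              intro hcon
              have := congrArg Fin.val hcon
              rw [hval] at this
              have h4 := Fin.le_iff_val_le_val.mp hz1
              omega
            rw [Equiv.swap_apply_of_ne_of_ne hza hzc]
            constructor
            · rw [Fin.le_iff_val_le_val, hval]
              have := Fin.le_iff_val_le_val.mp hz1
              omega
            · rw [Fin.lt_iff_val_lt_val, hval]
              have h4 := Fin.lt_iff_val_lt_val.mp hz2
              rcases Nat.lt_or_ge ((z : ℕ) + 1) (c : ℕ) with h5 | h5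
              · exact h5
              · exfalso
                apply hzc
                apply Fin.ext
                rw [hval]
                omega
        have h4 : ¬ (Equiv.swap a c * finRotate n).SameCycle b d := by
          intro hc
          have hbS : b ∈ univ.filter (fun z : Fin n => a ≤ z ∧ z < c) := by
            simp only [Finset.mem_filter, Finset.mem_univ, true_and]
            exact ⟨hab.le, hbc⟩
          have hdS := mem_of_sameCycle_invariant hS hc hbS
          simp only [Finset.mem_filter, Finset.mem_univ, true_and] at hdS
          exact absurd (hcd.trans hdS.2) (lt_irrefl c)
        have h5 : cycleCount (Equiv.swap a c * finRotate n) =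
            cycleCount (Equiv.swap b d * (Equiv.swap a c * finRotate n)) + 1 :=
          cycleCount_swap_mul_merge hbnd h4
        have h6 : (Equiv.swap a c * Equiv.swap b d)⁻¹ * finRotate n =
            Equiv.swap b d * (Equiv.swap a c * finRotate n) := by
          rw [mul_inv_rev, Equiv.swap_inv, Equiv.swap_inv, mul_assoc]
        rw [hσeq, h6] at hsum
        omega
      
end Backward

section Forward

/-- The cycle of `x` under `σ`, as a finset. -/
def cyc (σ : Perm (Fin n)) (x : Fin n) : Finset (Fin n) :=
  univ.filter (fun y => σ.SameCycle x y)

/-- `σ` is an increasing-cycle permutation. -/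
def Inc (σ : Perm (Fin n)) : Prop := ∀ x, σ x = blockNext (cyc σ x) x

/-- Non-crossing condition on the cycles of `σ`. -/
def NC (σ : Perm (Fin n)) : Prop :=
  ∀ a b c d : Fin n, a < b → b < c → c < d →
    σ.SameCycle a c → σ.SameCycle b d → σ.SameCycle a b

lemma mem_cyc {σ : Perm (Fin n)} {x y : Fin n} : y ∈ cyc σ x ↔ σ.SameCycle x y := by
  simp [cyc]

lemma self_mem_cyc (σ : Perm (Fin n)) (x : Fin n) : x ∈ cyc σ x :=
  mem_cyc.mpr (Equiv.Perm.SameCycle.refl _ x)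

lemma cyc_congr {σ : Perm (Fin n)} {x y : Fin n} (h : σ.SameCycle x y) :
    cyc σ x = cyc σ y := by
  ext z
  simp only [mem_cyc]
  exact ⟨fun hz => h.symm.trans hz, fun hz => h.trans hz⟩

lemma blockNext_mem {B : Finset (Fin n)} (hB : B.Nonempty) (x : Fin n) :
    blockNext B x ∈ B := by
  unfold blockNext
  by_cases h : (B.filter fun y => x < y).Nonempty
  · rw [dif_pos h]
    exact Finset.mem_of_mem_filter _ (Finset.min'_mem _ h)
  · rw [dif_neg h, dif_pos hB]
    exact Finset.min'_mem _ hB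

lemma blockNext_singleton (x : Fin n) : blockNext ({x} : Finset (Fin n)) x = x := by
  unfold blockNext
  have h : (({x} : Finset (Fin n)).filter fun y => x < y) = ∅ := by
    ext z
    simp only [Finset.mem_filter, Finset.mem_singleton, Finset.notMem_empty, iff_false]
    rintro ⟨rfl, h2⟩
    exact lt_irrefl _ h2
  rw [dif_neg (by rw [h]; exact Finset.not_nonempty_empty), dif_pos ⟨x, Finset.mem_singleton_self x⟩]
  simp

/-- If the filtered set is nonempty, `blockNext` is its min. -/
lemma blockNext_of_nonempty {B : Finset (Fin n)} {x : Fin n}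
    (h : (B.filter fun y => x < y).Nonempty) :
    blockNext B x = (B.filter fun y => x < y).min' h := by
  unfold blockNext
  rw [dif_pos h]

lemma blockNext_of_empty {B : Finset (Fin n)} {x : Fin n}
    (h : ¬ (B.filter fun y => x < y).Nonempty) (hB : B.Nonempty) :
    blockNext B x = B.min' hB := by
  unfold blockNext
  rw [dif_neg h, dif_pos hB]

/-- For an increasing-cycle permutation, the min of a nontrivial cycle moves up. -/
lemma min_lt_next {σ : Perm (Fin n)} (hInc : Inc σ) {z : Fin n} (hz : σ z ≠ z) :
    (cyc σ z).min' ⟨z, self_mem_cyc σ z⟩ < σ ((cyc σ z).min' ⟨z, self_mem_cyc σ z⟩) := by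
  set B := cyc σ z with hB
  set m := B.min' ⟨z, self_mem_cyc σ z⟩ with hm
  have hmB : m ∈ B := Finset.min'_mem _ _
  have hsczm : σ.SameCycle z m := mem_cyc.mp hmB
  have hCm : cyc σ m = B := (cyc_congr hsczm).symm
  have hσm : σ m = blockNext B m := by rw [← hCm]; exact hInc m
  -- find an element of B different from m
  have hw : ∃ w ∈ B, w ≠ m := by
    by_cases hzm : z = m
    · refine ⟨σ z, ?_, ?_⟩
      · exact mem_cyc.mpr (sameCycle_apply σ z)
      · rw [← hzm]; exact hz
    · exact ⟨z, self_mem_cyc σ z, hzm⟩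
  obtain ⟨w, hwB, hwm⟩ := hw
  have hmw : m < w := lt_of_le_of_ne (Finset.min'_le _ _ hwB) (Ne.symm hwm)
  have hne : (B.filter fun y => m < y).Nonempty := ⟨w, Finset.mem_filter.mpr ⟨hwB, hmw⟩⟩
  rw [hσm, blockNext_of_nonempty hne]
  have := Finset.min'_mem _ hne
  exact (Finset.mem_filter.mp this).2

/-- The image of `x` under an increasing-cycle permutation, when the filter is nonempty,
is the min of the filter. -/
lemma next_eq_min {σ : Perm (Fin n)} (hInc : Inc σ) {x : Fin n} (hx : x < σ x) :
    ∃ h : ((cyc σ x).filter fun y => x < y).Nonempty,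
      σ x = ((cyc σ x).filter fun y => x < y).min' h := by
  have h1 := hInc x
  by_cases h : ((cyc σ x).filter fun y => x < y).Nonempty
  · exact ⟨h, by rw [h1, blockNext_of_nonempty h]⟩
  · exfalso
    rw [blockNext_of_empty h ⟨x, self_mem_cyc σ x⟩] at h1
    have := Finset.min'_le (cyc σ x) x (self_mem_cyc σ x)
    rw [← h1] at this
    exact absurd (hx.trans_le this) (lt_irrefl x)

lemma not_sameCycle_of_between {σ : Perm (Fin n)} (hInc : Inc σ) {p r : Fin n}
    (hpr : p < r) (hrq : r < σ p) : ¬ σ.SameCycle p r := by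
  intro hsc
  obtain ⟨hne, hmin⟩ := next_eq_min hInc (hpr.trans hrq)
  have hrmem : r ∈ (cyc σ p).filter fun y => p < y :=
    Finset.mem_filter.mpr ⟨mem_cyc.mpr hsc, hpr⟩
  have := Finset.min'_le _ r hrmem
  rw [← hmin] at this
  exact absurd (hrq.trans_le this) (lt_irrefl r)

/-- Existence of a "good pair" for a nontrivial non-crossing increasing permutation. -/
lemma exists_good_pair {σ : Perm (Fin n)} (hInc : Inc σ) (hNC : NC σ) (hσ : σ ≠ 1) :
    ∃ p : Fin n, p < σ p ∧ ∀ r, p < r → r < σ p → σ r = r := by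
  classical
  have hex : ∃ z, σ z ≠ z := by
    by_contra hc
    push_neg at hc
    exact hσ (Equiv.ext fun z => by rw [hc z]; rfl)
  obtain ⟨z, hz⟩ := hex
  set Pairs := univ.filter (fun x : Fin n => x < σ x) with hPairs
  have hPne : Pairs.Nonempty := by
    refine ⟨(cyc σ z).min' ⟨z, self_mem_cyc σ z⟩, ?_⟩
    simp only [hPairs, Finset.mem_filter, Finset.mem_univ, true_and]
    exact min_lt_next hInc hz
  obtain ⟨p, hpP, hpmin⟩ := Finset.exists_min_image Pairs
    (fun x => (σ x : ℕ) - (x : ℕ)) hPne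
  simp only [hPairs, Finset.mem_filter, Finset.mem_univ, true_and] at hpP
  refine ⟨p, hpP, ?_⟩
  intro r hpr hrq
  by_contra hrne
  have hnpr : ¬ σ.SameCycle p r := not_sameCycle_of_between hInc hpr hrq
  by_cases hr : r < σ r
  · -- r is itself a pair; by minimality σ r jumps past σ p, giving a crossing
    have hrP : r ∈ Pairs := by
      simp only [hPairs, Finset.mem_filter, Finset.mem_univ, true_and]; exact hr
    have hminle := hpmin r hrP
    have hv1 := Fin.lt_iff_val_lt_val.mp hpP
    have hv2 := Fin.lt_iff_val_lt_val.mp hpr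
    have hv3 := Fin.lt_iff_val_lt_val.mp hrq
    have hv4 := Fin.lt_iff_val_lt_val.mp hr
    have hqlt : σ p < σ r := by
      rw [Fin.lt_iff_val_lt_val]
      omega
    exact hnpr (hNC p r (σ p) (σ r) hpr hrq hqlt (sameCycle_apply σ p) (sameCycle_apply σ r))
  · -- σ r < r : r is the max of its cycle, σ r is the min of its cycle
    have hσr : σ r < r := lt_of_le_of_ne (not_lt.mp hr) hrne
    set m' := σ r with hm'
    have hscrm : σ.SameCycle r m' := sameCycle_apply σ r
    by_cases hm'p : p < m'
    · -- m' is in (p, σ p); it's a pair with smaller gap: contradiction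
      have hm'pair : ∃ h : ((cyc σ m').filter fun y => m' < y).Nonempty,
          σ m' = ((cyc σ m').filter fun y => m' < y).min' h := by
        apply next_eq_min hInc
        -- m' < σ m'
        have h1 := hInc m'
        by_cases hh : ((cyc σ m').filter fun y => m' < y).Nonempty
        · rw [h1, blockNext_of_nonempty hh]
          exact (Finset.mem_filter.mp (Finset.min'_mem _ hh)).2
        · exfalso
          apply hh
          refine ⟨r, Finset.mem_filter.mpr ⟨?_, hσr⟩⟩
          exact mem_cyc.mpr hscrm.symm
      obtain ⟨hne', hmin'⟩ := hm'pair
      have hm'P : m' ∈ Pairs := by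
        simp only [hPairs, Finset.mem_filter, Finset.mem_univ, true_and]
        rw [hmin']
        exact (Finset.mem_filter.mp (Finset.min'_mem _ hne')).2
      have hminle := hpmin m' hm'P
      have hσm'r : σ m' ≤ r := by
        rw [hmin']
        exact Finset.min'_le _ r (Finset.mem_filter.mpr ⟨mem_cyc.mpr hscrm.symm, hσr⟩)
      have hv1 := Fin.lt_iff_val_lt_val.mp hpP
      have hv2 := Fin.lt_iff_val_lt_val.mp hpr
      have hv3 := Fin.lt_iff_val_lt_val.mp hrq
      have hv4 := Fin.lt_iff_val_lt_val.mp hm'p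
      have hv5 := Fin.le_iff_val_le_val.mp hσm'r
      have hv6 := Fin.lt_iff_val_lt_val.mp hσr
      omega
    · -- m' ≤ p; m' ≠ p, so m' < p < r < σ p is a crossing
      have hm'nep : m' ≠ p := by
        intro hc
        exact hnpr (hc ▸ hscrm.symm)
      have hm'ltp : m' < p := lt_of_le_of_ne (not_lt.mp hm'p) hm'nep
      have hcross := hNC m' p r (σ p) hm'ltp hpr hrq hscrm.symm (sameCycle_apply σ p)
      exact hnpr (hcross.symm.trans hscrm.symm)

lemma blockNext_erase_ne {B : Finset (Fin n)} {x q : Fin n} (hxB : x ∈ B)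
    (hbn : blockNext B x ≠ q) (hlow : ∃ y ∈ B, y < q) :
    blockNext (B.erase q) x = blockNext B x := by
  classical
  have hfe : (B.erase q).filter (fun y => x < y) = (B.filter fun y => x < y).erase q := by
    ext z
    simp only [Finset.mem_filter, Finset.mem_erase]
    tauto
  by_cases h : (B.filter fun y => x < y).Nonempty
  · have hbnx : blockNext B x = (B.filter fun y => x < y).min' h := blockNext_of_nonempty h
    have hmm : (B.filter fun y => x < y).min' h ∈ (B.filter fun y => x < y).erase q :=
      Finset.mem_erase.mpr ⟨by rw [← hbnx]; exact hbn, Finset.min'_mem _ h⟩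
    have hne' : ((B.erase q).filter fun y => x < y).Nonempty := by
      rw [hfe]
      exact ⟨_, hmm⟩
    rw [blockNext_of_nonempty hne', hbnx]
    apply le_antisymm
    · apply Finset.min'_le
      rw [hfe]
      exact hmm
    · apply Finset.le_min'
      intro z hz
      rw [hfe] at hz
      exact Finset.min'_le _ _ (Finset.mem_of_mem_erase hz)
  · have h2 : ¬ ((B.erase q).filter fun y => x < y).Nonempty := by
      rw [hfe]
      intro ⟨z, hz⟩
      exact h ⟨z, Finset.mem_of_mem_erase hz⟩
    obtain ⟨y, hyB, hyq⟩ := hlow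
    have hBne : B.Nonempty := ⟨x, hxB⟩
    have hBe : (B.erase q).Nonempty := ⟨y, Finset.mem_erase.mpr ⟨ne_of_lt hyq, hyB⟩⟩
    rw [blockNext_of_empty h hBne, blockNext_of_empty h2 hBe]
    have hminq : B.min' hBne ≠ q :=
      ne_of_lt (lt_of_le_of_lt (Finset.min'_le _ _ hyB) hyq)
    apply le_antisymm
    · apply Finset.min'_le
      exact Finset.mem_erase.mpr ⟨hminq, Finset.min'_mem _ hBne⟩
    · apply Finset.le_min'
      intro z hz
      exact Finset.min'_le _ _ (Finset.mem_of_mem_erase hz)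

lemma blockNext_erase_p {B : Finset (Fin n)} {p q : Fin n} (hpB : p ∈ B) (hqB : q ∈ B)
    (hpq : p < q) (hqmin : ∀ z ∈ B, p < z → q ≤ z) :
    blockNext (B.erase q) p = blockNext B q := by
  classical
  have hfe : (B.erase q).filter (fun y => p < y) = B.filter (fun y => q < y) := by
    ext z
    simp only [Finset.mem_filter, Finset.mem_erase]
    constructor
    · rintro ⟨⟨hzq, hzB⟩, hpz⟩
      exact ⟨hzB, lt_of_le_of_ne (hqmin z hzB hpz) (Ne.symm hzq)⟩
    · rintro ⟨hzB, hqz⟩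
      exact ⟨⟨ne_of_gt hqz, hzB⟩, hpq.trans hqz⟩
  by_cases h : (B.filter fun y => q < y).Nonempty
  · have h2 : ((B.erase q).filter fun y => p < y).Nonempty := by rw [hfe]; exact h
    rw [blockNext_of_nonempty h2, blockNext_of_nonempty h]
    apply le_antisymm
    · apply Finset.min'_le
      rw [hfe]
      exact Finset.min'_mem _ h
    · apply Finset.le_min'
      intro z hz
      rw [hfe] at hz
      exact Finset.min'_le _ _ hz
  · have h2 : ¬ ((B.erase q).filter fun y => p < y).Nonempty := by rw [hfe]; exact h
    have hBne : B.Nonempty := ⟨p, hpB⟩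
    have hpe : (B.erase q).Nonempty := ⟨p, Finset.mem_erase.mpr ⟨ne_of_lt hpq, hpB⟩⟩
    rw [blockNext_of_empty h2 hpe, blockNext_of_empty h hBne]
    have hminq : B.min' hBne ≠ q :=
      ne_of_lt (lt_of_le_of_lt (Finset.min'_le _ _ hpB) hpq)
    apply le_antisymm
    · apply Finset.min'_le
      exact Finset.mem_erase.mpr ⟨hminq, Finset.min'_mem _ hBne⟩
    · apply Finset.le_min'
      intro z hz
      exact Finset.min'_le _ _ (Finset.mem_of_mem_erase hz)

section SplitPerm

variable {σ : Perm (Fin n)} {q : Fin n}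

lemma cyc_del_self (hqq : σ q ≠ q) : cyc (σ * Equiv.swap q (σ⁻¹ q)) q = {q} := by
  ext y
  simp only [mem_cyc, Finset.mem_singleton]
  constructor
  · intro hy
    exact eq_of_sameCycle_fixed (del_apply_self hqq) hy
  · rintro rfl
    exact Equiv.Perm.SameCycle.refl _ _

lemma cyc_del_other (hqq : σ q ≠ q) {x : Fin n} (hxq : x ≠ q) :
    cyc (σ * Equiv.swap q (σ⁻¹ q)) x = (cyc σ x).erase q := by
  ext y
  simp only [mem_cyc, Finset.mem_erase]
  constructor
  · intro hy
    have hyq : y ≠ q := by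
      rintro rfl
      exact hxq (eq_of_sameCycle_fixed (del_apply_self hqq) hy.symm)
    exact ⟨hyq, del_sameCycle_imp hqq hy⟩
  · rintro ⟨hyq, hy⟩
    exact del_sameCycle hqq hxq hyq hy

lemma Inc_del (hInc : Inc σ) {p : Fin n} (hpq : p < σ p) :
    Inc (σ * Equiv.swap (σ p) (σ⁻¹ (σ p))) := by
  have hq : σ⁻¹ (σ p) = p := Equiv.Perm.inv_apply_self σ p
  set q := σ p with hqdef
  have hqq : σ q ≠ q := by
    intro hc
    have h1 : σ p = σ q := by rw [hc]
    exact ne_of_lt hpq (σ.injective h1)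
  intro x
  by_cases hxq : x = q
  · subst hxq
    rw [cyc_del_self hqq, del_apply_self hqq, blockNext_singleton]
  by_cases hxp : x = p
  · subst hxp
    have h1 : (σ * Equiv.swap q (σ⁻¹ q)) x = σ q := by
      conv_lhs => rw [← hq]
      exact del_apply_p hqq
    rw [h1, cyc_del_other hqq hxq]
    have hcycq : cyc σ x = cyc σ q := cyc_congr (hqdef ▸ sameCycle_apply σ x)
    have hIncq : σ q = blockNext (cyc σ q) q := hInc q
    rw [hIncq, ← hcycq]
    refine (blockNext_erase_p (self_mem_cyc σ x) ?_ hpq ?_).symm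
    · rw [hcycq]
      exact self_mem_cyc σ q
    · intro z hz hxz
      obtain ⟨hne, hmin⟩ := next_eq_min hInc hpq
      rw [← hqdef] at hmin
      rw [hmin]
      exact Finset.min'_le _ _ (Finset.mem_filter.mpr ⟨hz, hxz⟩)
  · have h1 : (σ * Equiv.swap q (σ⁻¹ q)) x = σ x :=
      del_apply_other hxq (by rw [hq]; exact hxp)
    rw [h1, cyc_del_other hqq hxq]
    by_cases hxB : σ.SameCycle q x
    · rw [blockNext_erase_ne (self_mem_cyc σ x) ?_ ?_]
      · exact hInc x
      · rw [← hInc x]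
        intro hc
        apply hxp
        apply σ.injective
        rw [hc, ← hqdef]
      · refine ⟨p, ?_, hpq⟩
        rw [mem_cyc]
        exact (((hqdef ▸ sameCycle_apply σ p).trans hxB).symm : σ.SameCycle x p)
    · have hnotin : q ∉ cyc σ x := by
        rw [mem_cyc]
        intro hc
        exact hxB hc.symm
      rw [Finset.erase_eq_of_notMem hnotin]
      exact hInc x

lemma NC_del (hNC : NC σ) (hqq : σ q ≠ q) : NC (σ * Equiv.swap q (σ⁻¹ q)) := by
  intro a b c d hab hbc hcd hac hbd
  have hfix := del_apply_self hqq
  have haq : a ≠ q := by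
    rintro rfl
    exact ne_of_lt (hab.trans hbc) (eq_of_sameCycle_fixed hfix hac).symm
  have hcq : c ≠ q := by
    rintro rfl
    exact ne_of_lt (hab.trans hbc) (eq_of_sameCycle_fixed hfix hac.symm)
  have hbq : b ≠ q := by
    rintro rfl
    exact ne_of_lt (hbc.trans hcd) (eq_of_sameCycle_fixed hfix hbd).symm
  have hdq : d ≠ q := by
    rintro rfl
    exact ne_of_lt (hbc.trans hcd) (eq_of_sameCycle_fixed hfix hbd.symm)
  have h1 := hNC a b c d hab hbc hcd (del_sameCycle_imp hqq hac) (del_sameCycle_imp hqq hbd)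
  exact del_sameCycle hqq haq hbq h1

lemma chain_sameCycle [NeZero n] {ρ : Perm (Fin n)} {p q : Fin n} (hpq : p < q)
    (hqfix : ρ q = q) (hmid : ∀ r : Fin n, p < r → r < q → ρ r = r) :
    (ρ⁻¹ * finRotate n).SameCycle p q := by
  have hqinv : ρ⁻¹ q = q := by
    conv_lhs => rw [← hqfix]
    rw [Equiv.Perm.inv_apply_self]
  have key : ∀ k, ∀ r : Fin n, p ≤ r → r < q → (q : ℕ) - (r : ℕ) = k →
      (ρ⁻¹ * finRotate n).SameCycle r q := by
    intro k
    induction k using Nat.strong_induction_on with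
    | _ k ih =>
      intro r hpr hrq hk
      have happ : (ρ⁻¹ * finRotate n) r = ρ⁻¹ (r + 1) := by
        rw [Equiv.Perm.mul_apply, finRotate_apply]
      have hval : ((r + 1 : Fin n) : ℕ) = (r : ℕ) + 1 := val_add_one_of_lt' hrq
      have hvr := Fin.lt_iff_val_lt_val.mp hrq
      by_cases hc : r + 1 = q
      · have h2 : (ρ⁻¹ * finRotate n) r = q := by
          rw [happ, hc, hqinv]
        have h3 := sameCycle_apply (ρ⁻¹ * finRotate n) r
        rwa [h2] at h3
      · have hlt : r + 1 < q := by
          rw [Fin.lt_iff_val_lt_val, hval]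
          rcases Nat.lt_or_ge ((r : ℕ) + 1) (q : ℕ) with h5 | h5
          · exact h5
          · exfalso
            exact hc (Fin.ext (by rw [hval]; omega))
        have hple : p < r + 1 := by
          rw [Fin.lt_iff_val_lt_val, hval]
          have := Fin.le_iff_val_le_val.mp hpr
          omega
        have hfixr : ρ (r + 1) = r + 1 := hmid _ hple hlt
        have hinvr : ρ⁻¹ (r + 1) = r + 1 := by
          conv_lhs => rw [← hfixr]
          rw [Equiv.Perm.inv_apply_self]
        have h2 : (ρ⁻¹ * finRotate n) r = r + 1 := by rw [happ, hinvr]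
        have h3 := sameCycle_apply (ρ⁻¹ * finRotate n) r
        rw [h2] at h3
        refine h3.trans (ih ((q : ℕ) - ((r : ℕ) + 1)) ?_ (r + 1) hple.le hlt (by rw [hval]))
        omega
  exact key ((q : ℕ) - (p : ℕ)) p le_rfl hpq rfl

end SplitPerm

lemma forward_sum (hn : 0 < n) : ∀ k (σ : Perm (Fin n)), σ.support.card ≤ k →
    Inc σ → NC σ → cycleCount σ + cycleCount (σ⁻¹ * finRotate n) = n + 1 := by
  haveI : NeZero n := ⟨hn.ne'⟩
  intro k
  induction k with
  | zero =>
      intro σ hk _ _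
      have hσ : σ = 1 := by
        rw [← Equiv.Perm.support_eq_empty_iff]
        exact Finset.card_eq_zero.mp (Nat.le_zero.mp hk)
      subst hσ
      rw [cycleCount_one, inv_one, one_mul, cycleCount_finRotate hn]
  | succ k ih =>
      intro σ hk hInc hNC
      by_cases hσ1 : σ = 1
      · subst hσ1
        rw [cycleCount_one, inv_one, one_mul, cycleCount_finRotate hn]
      obtain ⟨p, hpq, hmid⟩ := exists_good_pair hInc hNC hσ1
      have hInc' := Inc_del hInc hpq
      have hq : σ⁻¹ (σ p) = p := Equiv.Perm.inv_apply_self σ p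
      set q := σ p with hqdef
      have hqq : σ q ≠ q := by
        intro hc
        have h1 : σ p = σ q := by rw [hc]
        exact ne_of_lt hpq (σ.injective h1)
      have hNC' := NC_del hNC hqq
      set σ' := σ * Equiv.swap q (σ⁻¹ q) with hσ'def
      have hsupp : σ'.support.card ≤ k := by
        have hsub : σ'.support ⊆ σ.support.erase q := by
          intro z hz
          rw [Equiv.Perm.mem_support] at hz
          rw [Finset.mem_erase, Equiv.Perm.mem_support]
          constructor
          · intro hcon
            subst hcon
            exact hz (del_apply_self hqq)
          · by_cases hz1 : z = q
            · exfalso; subst hz1; exact hz (del_apply_self hqq)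
            by_cases hz2 : z = σ⁻¹ q
            · subst hz2
              rw [Equiv.Perm.apply_inv_self]
              exact fun hcon => p_ne_x hqq hcon.symm
            · rw [hσ'def, del_apply_other hz1 hz2] at hz
              exact hz
        have hqs : q ∈ σ.support := Equiv.Perm.mem_support.mpr hqq
        have := Finset.card_le_card hsub
        rw [Finset.card_erase_of_mem hqs] at this
        omega
      have hsum' := ih σ' hsupp hInc' hNC'
      have hqnep : q ≠ σ⁻¹ q := by
        rw [hq]
        exact (ne_of_lt hpq).symm
      have hscqp : σ.SameCycle q (σ⁻¹ q) := by
        have := sameCycle_apply σ⁻¹ q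
        exact sameCycle_inv.mp this
      have hcσ' : cycleCount σ' = cycleCount σ + 1 := by
        have hinv : σ'⁻¹ = Equiv.swap q (σ⁻¹ q) * σ⁻¹ := by
          rw [hσ'def, mul_inv_rev, Equiv.swap_inv]
        rw [← cycleCount_inv σ', hinv,
          cycleCount_swap_mul_split hqnep (sameCycle_inv.mpr hscqp), cycleCount_inv]
      have hchain : (σ'⁻¹ * finRotate n).SameCycle p q := by
        apply chain_sameCycle hpq
        · exact del_apply_self hqq
        · intro r hpr hrq
          rw [hσ'def, del_apply_other (ne_of_lt hrq) (by rw [hq]; exact ne_of_gt hpr)]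
          exact hmid r hpr hrq
      have hτeq : Equiv.swap q (σ⁻¹ q) * (σ'⁻¹ * finRotate n) = σ⁻¹ * finRotate n := by
        rw [hσ'def, mul_inv_rev, Equiv.swap_inv, ← mul_assoc, ← mul_assoc,
          Equiv.swap_mul_self, one_mul]
      have hcτ : cycleCount (σ⁻¹ * finRotate n) = cycleCount (σ'⁻¹ * finRotate n) + 1 := by
        rw [← hτeq]
        exact cycleCount_swap_mul_split hqnep (by rw [hq]; exact hchain.symm)
      omega

end Forward

section Main

variable {π : Finpartition (Finset.univ : Finset (Fin n))} {σ : Perm (Fin n)}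

lemma part_nonempty (π : Finpartition (Finset.univ : Finset (Fin n))) (z : Fin n) :
    (π.part z).Nonempty := ⟨z, π.mem_part (Finset.mem_univ z)⟩

lemma part_eq_of_sameCycle (hσ : ∀ x : Fin n, σ x = blockNext (π.part x) x)
    {x y : Fin n} (h : σ.SameCycle x y) : π.part x = π.part y := by
  have hnextmem : ∀ z : Fin n, σ z ∈ π.part z := by
    intro z
    rw [hσ z]
    exact blockNext_mem (part_nonempty π z) z
  have hstep : ∀ z : Fin n, π.part (σ z) = π.part z := by
    intro z
    exact π.part_eq_of_mem (π.part_mem.mpr (Finset.mem_univ z)) (hnextmem z)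
  exact sameCycle_induct (R := fun u v => π.part u = π.part v)
    (fun h1 h2 => h1.trans h2) (fun _ => rfl) (fun z => (hstep z).symm) h

lemma sameCycle_of_mem_part (hσ : ∀ x : Fin n, σ x = blockNext (π.part x) x)
    {x y : Fin n} (hy : y ∈ π.part x) : σ.SameCycle x y := by
  classical
  have aux : ∀ v : ℕ, ∀ y, y ∈ π.part x → (y : ℕ) = v →
      σ.SameCycle ((π.part x).min' (part_nonempty π x)) y := by
    intro v
    induction v using Nat.strong_induction_on with
    | _ v ih =>
      intro y hy hyv
      by_cases hmin : y = (π.part x).min' (part_nonempty π x)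
      · rw [hmin]
      · have hlt : (π.part x).min' (part_nonempty π x) < y :=
          lt_of_le_of_ne (Finset.min'_le _ _ hy) (Ne.symm hmin)
        have hSne : ((π.part x).filter (fun z => z < y)).Nonempty :=
          ⟨(π.part x).min' (part_nonempty π x),
            Finset.mem_filter.mpr ⟨Finset.min'_mem _ _, hlt⟩⟩
        set m := ((π.part x).filter (fun z => z < y)).max' hSne with hmdef
        have hmS := Finset.max'_mem _ hSne
        have hmpart : m ∈ π.part x := (Finset.mem_filter.mp hmS).1
        have hmy : m < y := (Finset.mem_filter.mp hmS).2
        have hpm : π.part m = π.part x :=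
          π.part_eq_of_mem (π.part_mem.mpr (Finset.mem_univ x)) hmpart
        have hσm : σ m = y := by
          rw [hσ m, hpm]
          have hne2 : ((π.part x).filter fun z => m < z).Nonempty :=
            ⟨y, Finset.mem_filter.mpr ⟨hy, hmy⟩⟩
          rw [blockNext_of_nonempty hne2]
          apply le_antisymm
          · exact Finset.min'_le _ _ (Finset.mem_filter.mpr ⟨hy, hmy⟩)
          · apply Finset.le_min'
            intro z hz
            obtain ⟨hzB, hmz⟩ := Finset.mem_filter.mp hz
            by_contra hzy
            push_neg at hzy
            have hzS : z ∈ (π.part x).filter (fun z => z < y) :=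
              Finset.mem_filter.mpr ⟨hzB, hzy⟩
            exact absurd hmz (not_lt.mpr (Finset.le_max' _ z hzS))
        have hvm : (m : ℕ) < v := by
          have := Fin.lt_iff_val_lt_val.mp hmy
          omega
        have hscm := ih (m : ℕ) hvm m hmpart rfl
        have happ := sameCycle_apply σ m
        rw [hσm] at happ
        exact hscm.trans happ
  have h1 : σ.SameCycle ((π.part x).min' (part_nonempty π x)) x :=
    aux (x : ℕ) x (π.mem_part (Finset.mem_univ x)) rfl
  have h2 : σ.SameCycle ((π.part x).min' (part_nonempty π x)) y :=
    aux (y : ℕ) y hy rfl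
  exact h1.symm.trans h2

lemma part_eq_cyc (hσ : ∀ x : Fin n, σ x = blockNext (π.part x) x) (x : Fin n) :
    π.part x = cyc σ x := by
  ext y
  rw [mem_cyc]
  constructor
  · exact sameCycle_of_mem_part hσ
  · intro h
    rw [part_eq_of_sameCycle hσ h]
    exact π.mem_part (Finset.mem_univ y)

lemma isNonCrossing_iff_NC (hσ : ∀ x : Fin n, σ x = blockNext (π.part x) x) :
    π.IsNonCrossing ↔ NC σ := by
  have hpc := part_eq_cyc hσ
  constructor
  · intro h a b c d hab hbc hcd hac hbd
    have hcmem : c ∈ π.part a := by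
      rw [hpc a]
      exact mem_cyc.mpr hac
    have hdmem : d ∈ π.part b := by
      rw [hpc b]
      exact mem_cyc.mpr hbd
    have h1 := h a b c d hab hbc hcd (π.part a) (π.part_mem.mpr (Finset.mem_univ a))
      (π.part b) (π.part_mem.mpr (Finset.mem_univ b)) (π.mem_part (Finset.mem_univ a))
      hcmem (π.mem_part (Finset.mem_univ b)) hdmem
    have hbmem : b ∈ π.part a := by
      rw [h1]
      exact π.mem_part (Finset.mem_univ b)
    rw [hpc a] at hbmem
    exact mem_cyc.mp hbmem
  · intro h a b c d hab hbc hcd B₁ hB₁ B₂ hB₂ ha hc hb hd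
    have e1 : π.part a = B₁ := π.part_eq_of_mem hB₁ ha
    have e2 : π.part b = B₂ := π.part_eq_of_mem hB₂ hb
    have hac : σ.SameCycle a c := by
      apply mem_cyc.mp
      rw [← hpc a, e1]
      exact hc
    have hbd : σ.SameCycle b d := by
      apply mem_cyc.mp
      rw [← hpc b, e2]
      exact hd
    have hab' := h a b c d hab hbc hcd hac hbd
    rw [← e1, ← e2, hpc a, hpc b]
    exact cyc_congr hab' 

end Main

end NCAux

/-- A set partition `π` of `{1,…,n}`, viewed as the permutation `σ` whose cycles are
the blocks of `π` written in increasing order, is non-crossing if and only if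
`|π| + |π⁻¹ γ_n| = n + 1`, where `γ_n = (1,2,…,n)` is the full cycle (`finRotate n`)
and `|·|` counts cycles (including fixed points). -/
theorem noncrossing_iff_cycle_count (n : ℕ) (hn : 0 < n)
    (π : Finpartition (Finset.univ : Finset (Fin n)))
    (σ : Equiv.Perm (Fin n)) (hσ : ∀ x : Fin n, σ x = blockNext (π.part x) x) :
    π.IsNonCrossing ↔
      cycleCount σ + cycleCount (σ⁻¹ * finRotate n) = n + 1 := by
  have hpc := NCAux.part_eq_cyc hσ
  have hInc : NCAux.Inc σ := fun x => by rw [← hpc x]; exact hσ x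
  rw [NCAux.isNonCrossing_iff_NC hσ]
  constructor
  · intro hNC
    exact NCAux.forward_sum hn σ.support.card σ le_rfl hInc hNC
  · intro hsum a b c d hab hbc hcd hac hbd
    by_contra hnab
    exact NCAux.crossing_no_eq hn σ.support.card σ le_rfl a b c d hab hbc hcd hac hbd hnab hsum
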